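/- Let φ : R → S be a ring homomorphism from a binomial ring R to a ring S whose underlying additive group is torsion-free. Then the kernel of φ is a binomial ideal: (r choose n) ∈ ker φ for every r ∈ ker φ and n > 0. -/
import Mathlib

lemma smeval_map_int {R S : Type*} [CommRing R] [Ring S] (φ : R →+* S)
    (p : Polynomial ℤ) (r : R) : φ (p.smeval r) = p.smeval (φ r) := by
  simp only [Polynomial.smeval_eq_sum, Polynomial.smul_pow, Polynomial.sum, map_sum,
    map_zsmul, map_pow]

/-- If `φ : R → S` is a ring homomorphism from a binomial ring `R` to a ring `S` whose
additive group is torsion-free, then `ker φ` is a binomial ideal: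
`(r choose n) ∈ ker φ` for every `r ∈ ker φ` and `n > 0`. -/
theorem ker_is_binomial_ideal {R S : Type*} [CommRing R] [BinomialRing R] [Ring S]
    (htf : ∀ (n : ℕ) (s : S), 0 < n → n • s = 0 → s = 0)
    (φ : R →+* S) (r : R) (hr : r ∈ RingHom.ker φ) (n : ℕ) (hn : 0 < n) :
    Ring.choose r n ∈ RingHom.ker φ := by
  rw [RingHom.mem_ker] at hr ⊢
  apply htf n.factorial _ n.factorial_pos
  rw [← map_nsmul, ← Ring.descPochhammer_eq_factorial_smul_choose,
    smeval_map_int, hr, Polynomial.smeval_at_zero,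
    Polynomial.coeff_zero_eq_eval_zero, descPochhammer_ne_zero_eval_zero (R := ℤ) hn.ne',
    zero_smul]
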